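/- Let O be a Hermitian operator on a finite-dimensional Hilbert space H, and let T be a trace-preserving completely positive linear map on operators of H satisfying T(O) = O. Let P₊ be the orthogonal projection onto the span of eigenvectors of O with positive eigenvalues, and define O₊ = P₊O and O₋ = −(1−P₊)O (both positive semidefinite). Then Tr[(1−P₊) T(O₊)] = 0 and Tr[P₊ T(O₋)] = 0. -/

import Mathlib

open Matrix BigOperators
open scoped ComplexOrder

noncomputable section

def blockMap {n : Type*} [Fintype n] [DecidableEq n]
    (T : Matrix n n ℂ →ₗ[ℂ] Matrix n n ℂ) (k : ℕ)
    (M : Matrix (n × Fin k) (n × Fin k) ℂ) : Matrix (n × Fin k) (n × Fin k) ℂ :=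
  Matrix.of fun p q => T (Matrix.of fun i j => M (i, p.2) (j, q.2)) p.1 q.1

lemma psd_trace_nonneg {n : Type*} [Fintype n] [DecidableEq n]
    {M : Matrix n n ℂ} (hM : M.PosSemidef) : 0 ≤ M.trace := by
  rw [Matrix.trace]
  apply Finset.sum_nonneg
  intro i _
  have h := hM.dotProduct_mulVec_nonneg (Pi.single i 1)
  have hs : star (Pi.single i 1 : n → ℂ) = Pi.single i 1 := by
    ext j; simp [Pi.single_apply, apply_ite]
  rw [hs, Matrix.mulVec_single] at h
  simpa [single_dotProduct] using h

lemma map_psd {n : Type*} [Fintype n] [DecidableEq n]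
    (T : Matrix n n ℂ →ₗ[ℂ] Matrix n n ℂ)
    (hcp : ∀ k : ℕ, ∀ M : Matrix (n × Fin k) (n × Fin k) ℂ,
      M.PosSemidef → (blockMap T k M).PosSemidef)
    {M : Matrix n n ℂ} (hM : M.PosSemidef) : (T M).PosSemidef := by
  let e : n × Fin 1 ≃ n := Equiv.prodUnique n (Fin 1)
  have h2 := hcp 1 _ (hM.submatrix e)
  have key : blockMap T 1 (M.submatrix e e) = (T M).submatrix e e := by
    ext p q
    rfl
  rw [key] at h2
  exact (Matrix.posSemidef_submatrix_equiv e).mp h2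

lemma proj_trace_nonneg {n : Type*} [Fintype n] [DecidableEq n]
    {R M : Matrix n n ℂ} (hR : R.IsHermitian) (hRproj : R * R = R)
    (hM : M.PosSemidef) : 0 ≤ (R * M).trace := by
  have : (R * M * Rᴴ).trace = (R * M).trace := by
    rw [hR.eq, Matrix.trace_mul_cycle, hRproj]
  rw [← this]
  exact psd_trace_nonneg (hM.mul_mul_conjTranspose_same R)

theorem stmt0 {n : Type*} [Fintype n] [DecidableEq n]
    (O P : Matrix n n ℂ) (hO : O.IsHermitian)
    (hPherm : P.IsHermitian) (hPproj : P * P = P)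
    (hcomm : P * O = O * P)
    (hpos : (P * O).PosSemidef)
    (hneg : ((P - 1) * O).PosSemidef)
    (hstrict : ∀ x : n → ℂ, P.mulVec x = x → x ≠ 0 →
      0 < (star x ⬝ᵥ O.mulVec x).re)
    (T : Matrix n n ℂ →ₗ[ℂ] Matrix n n ℂ)
    (htp : ∀ X : Matrix n n ℂ, (T X).trace = X.trace)
    (hcp : ∀ k : ℕ, ∀ M : Matrix (n × Fin k) (n × Fin k) ℂ,
      M.PosSemidef → (blockMap T k M).PosSemidef)
    (hTO : T O = O) :
    ((1 - P) * T (P * O)).trace = 0 ∧ (P * T ((P - 1) * O)).trace = 0 := by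
  set a := ((1 - P) * T (P * O)).trace with ha
  set b := (P * T ((P - 1) * O)).trace with hb
  have hQherm : (1 - P : Matrix n n ℂ).IsHermitian := by
    simpa using Matrix.IsHermitian.sub Matrix.isHermitian_one hPherm
  have hQproj : (1 - P) * (1 - P) = (1 - P : Matrix n n ℂ) := by
    simp [Matrix.mul_sub, Matrix.sub_mul, hPproj]
  have ha0 : 0 ≤ a := proj_trace_nonneg hQherm hQproj (map_psd T hcp hpos)
  have hb0 : 0 ≤ b := proj_trace_nonneg hPherm hPproj (map_psd T hcp hneg)
  have hO_split : P * O - (P - 1) * O = O := by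
    rw [Matrix.sub_mul, Matrix.one_mul]; abel
  have hsum : a + b = 0 := by
    have h1 : T (P * O) - T ((P - 1) * O) = O := by
      rw [← map_sub, hO_split, hTO]
    have h2 : (P * O).trace = (P * (T (P * O) - T ((P - 1) * O))).trace := by
      rw [h1]
    have h3 : (P * T (P * O)).trace = (T (P * O)).trace - a := by
      rw [ha]
      have he : (1 - P) * T (P * O) = T (P * O) - P * T (P * O) := by
        rw [Matrix.sub_mul, Matrix.one_mul]
      rw [he, Matrix.trace_sub]
      ring
    rw [Matrix.mul_sub, Matrix.trace_sub, h3, ← hb, htp] at h2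
    linear_combination h2
  have haz : a = 0 := le_antisymm (by calc a ≤ a + b := le_add_of_nonneg_right hb0
                                          _ = 0 := hsum) ha0
  have hbz : b = 0 := by linear_combination hsum - haz
  exact ⟨haz, hbz⟩
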